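/- Fix s ∈ [0,1]. The maximum of the quantumness Q(p) = (p₀↓ − p₁↓)² + (p₂↓ − p₃↓)² over all probability vectors p = (p₀,p₁,p₂,p₃) satisfying P₁ ≥ s equals 1 − s²; it is attained by the vector q₁ = ((1 + √(1−s²))/2, (1 − √(1−s²))/2, 0, 0). -/

import Mathlib

private lemma pair_le_aux (q₀ q₁ q₂ q₃ a b c d : ℝ)
    (h : ({q₀, q₁, q₂, q₃} : Multiset ℝ) = ({a, b, c, d} : Multiset ℝ))
    (h21 : q₂ ≤ q₁) (h32 : q₃ ≤ q₂)
    (ha : a ≤ q₀) (hb : b ≤ q₀) : a + b ≤ q₀ + q₁ := by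
  by_contra hcon
  push_neg at hcon
  have hqa : q₁ < a := by linarith
  have hqb : q₁ < b := by linarith
  have hc := congrArg (Multiset.countP (fun x => q₁ < x)) h
  have hq3 : Multiset.countP (fun x => q₁ < x) ({q₃} : Multiset ℝ) = 0 := by
    rw [show ({q₃} : Multiset ℝ) = q₃ ::ₘ 0 from rfl, Multiset.countP_cons]
    simp [not_lt.2 (h32.trans h21)]
  have hd : Multiset.countP (fun x => q₁ < x) ({d} : Multiset ℝ) ≤ 1 := by
    have := Multiset.countP_le_card (fun x => q₁ < x) ({d} : Multiset ℝ)
    rwa [Multiset.card_singleton] at this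
  simp only [Multiset.insert_eq_cons, Multiset.countP_cons] at hc
  rw [hq3] at hc
  simp [hqa, hqb, not_lt.2 h21, lt_irrefl] at hc
  split_ifs at hc <;> omega

private lemma sqrt_le_half_aux (x y : ℝ) (hx : 0 ≤ x) (hy : 0 ≤ y) :
    Real.sqrt (x * y) ≤ (x + y) / 2 := by
  calc Real.sqrt (x * y) ≤ Real.sqrt (((x + y) / 2) ^ 2) :=
        Real.sqrt_le_sqrt (by nlinarith [sq_nonneg (x - y)])
    _ = (x + y) / 2 := Real.sqrt_sq (by linarith)

private lemma main_aux (s : ℝ) (hs0 : 0 ≤ s)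
    (p₀ p₁ p₂ p₃ q₀ q₁ q₂ q₃ : ℝ) (hp0 : 0 ≤ p₀) (hp1 : 0 ≤ p₁) (hp2 : 0 ≤ p₂) (hp3 : 0 ≤ p₃)
    (hsum : p₀ + p₁ + p₂ + p₃ = 1)
    (h : ({q₀, q₁, q₂, q₃} : Multiset ℝ) = ({p₀, p₁, p₂, p₃} : Multiset ℝ))
    (h10 : q₁ ≤ q₀) (h21 : q₂ ≤ q₁) (h32 : q₃ ≤ q₂)
    (hP : s ≤ 2 * (Real.sqrt (p₀ * p₁) + Real.sqrt (p₂ * p₃))) :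
    (q₀ - q₁) ^ 2 + (q₂ - q₃) ^ 2 ≤ 1 - s ^ 2 := by
  have hsumq : q₀ + q₁ + q₂ + q₃ = p₀ + p₁ + p₂ + p₃ := by
    have := congrArg Multiset.sum h
    simp at this; linarith
  have hsq : q₀^2 + q₁^2 + q₂^2 + q₃^2 = p₀^2 + p₁^2 + p₂^2 + p₃^2 := by
    have := congrArg (fun m : Multiset ℝ => (m.map (fun x => x ^ 2)).sum) h
    simp at this; linarith
  have hprod : q₀ * q₁ * q₂ * q₃ = p₀ * p₁ * p₂ * p₃ := by
    have := congrArg Multiset.prod h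
    simp at this; linear_combination this
  have hmax : ∀ x ∈ ({p₀, p₁, p₂, p₃} : Multiset ℝ), x ≤ q₀ := by
    intro x hx
    rw [← h] at hx
    simp at hx
    rcases hx with rfl | rfl | rfl | rfl <;> linarith
  have hp0q := hmax p₀ (by simp)
  have hp1q := hmax p₁ (by simp)
  have hp2q := hmax p₂ (by simp)
  have hp3q := hmax p₃ (by simp)
  have hq3 : 0 ≤ q₃ := by
    have : q₃ ∈ ({p₀, p₁, p₂, p₃} : Multiset ℝ) := by rw [← h]; simp
    simp at this
    rcases this with rfl | rfl | rfl | rfl <;> linarith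
  have hq2 : 0 ≤ q₂ := hq3.trans h32
  have hq1 : 0 ≤ q₁ := hq2.trans h21
  have hq0 : 0 ≤ q₀ := hq1.trans h10
  have hv1 : p₀ + p₁ ≤ q₀ + q₁ := pair_le_aux q₀ q₁ q₂ q₃ p₀ p₁ p₂ p₃ h h21 h32 hp0q hp1q
  have h' : ({q₀, q₁, q₂, q₃} : Multiset ℝ) = ({p₂, p₃, p₀, p₁} : Multiset ℝ) := by
    rw [h]
    show (p₀ ::ₘ p₁ ::ₘ p₂ ::ₘ p₃ ::ₘ 0) = (p₂ ::ₘ p₃ ::ₘ p₀ ::ₘ p₁ ::ₘ 0)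
    rw [Multiset.cons_swap p₁ p₂, Multiset.cons_swap p₀ p₂, Multiset.cons_swap p₁ p₃,
      Multiset.cons_swap p₀ p₃]
  have hv2 : p₂ + p₃ ≤ q₀ + q₁ := pair_le_aux q₀ q₁ q₂ q₃ p₂ p₃ p₀ p₁ h' h21 h32 hp2q hp3q
  clear h h' hmax
  set A := Real.sqrt (p₀ * p₁) with hA
  set B := Real.sqrt (p₂ * p₃) with hB
  have hA0 : 0 ≤ A := Real.sqrt_nonneg _
  have hB0 : 0 ≤ B := Real.sqrt_nonneg _
  have hA2 : A ^ 2 = p₀ * p₁ := Real.sq_sqrt (mul_nonneg hp0 hp1)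
  have hB2 : B ^ 2 = p₂ * p₃ := Real.sq_sqrt (mul_nonneg hp2 hp3)
  have hAB : A * B = Real.sqrt (q₀ * q₁ * q₂ * q₃) := by
    rw [hA, hB, ← Real.sqrt_mul (mul_nonneg hp0 hp1),
      show p₀ * p₁ * (p₂ * p₃) = p₀ * p₁ * p₂ * p₃ by ring, ← hprod]
  have hAB1 : A * B ≤ (q₀ * q₂ + q₁ * q₃) / 2 := by
    rw [hAB, show q₀ * q₁ * q₂ * q₃ = (q₀ * q₂) * (q₁ * q₃) by ring]
    exact sqrt_le_half_aux _ _ (mul_nonneg hq0 hq2) (mul_nonneg hq1 hq3)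
  have hAB2 : A * B ≤ (q₀ * q₃ + q₁ * q₂) / 2 := by
    rw [hAB, show q₀ * q₁ * q₂ * q₃ = (q₀ * q₃) * (q₁ * q₂) by ring]
    exact sqrt_le_half_aux _ _ (mul_nonneg hq0 hq3) (mul_nonneg hq1 hq2)
  have hkey : p₀ * p₁ + p₂ * p₃ ≤ q₀ * q₁ + q₂ * q₃ := by
    have hS2 : (q₀ + q₁ + q₂ + q₃) ^ 2 = (p₀ + p₁ + p₂ + p₃) ^ 2 := by rw [hsumq]
    have hE3 : (q₀ + q₁) * (q₀ + q₁ + q₂ + q₃) = q₀ + q₁ := by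
      rw [hsumq, hsum]; ring
    have hE6 : (q₀ + q₁) * (p₀ + p₁ + p₂ + p₃) = q₀ + q₁ := by rw [hsum]; ring
    have hH : 0 ≤ (q₀ + q₁ - (p₀ + p₁)) * (q₀ + q₁ - (p₂ + p₃)) :=
      mul_nonneg (by linarith) (by linarith)
    linarith only [hS2, hsq, hE3, hE6, hH]
  have hs2 : s ^ 2 ≤ (2 * (A + B)) ^ 2 := by
    have := pow_le_pow_left₀ hs0 hP 2
    linarith
  have hs2' : s ^ 2 ≤ 4 * (p₀ * p₁) + 4 * (p₂ * p₃) + 8 * (A * B) := by linarith only [hs2, hA2, hB2]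
  have h1' : q₀ + q₁ + q₂ + q₃ = 1 := by linarith
  have hid : (q₀ - q₁) ^ 2 + (q₂ - q₃) ^ 2
      = 1 - 4 * (q₀ * q₁ + q₂ * q₃) - 2 * (q₀ * q₂ + q₀ * q₃ + q₁ * q₂ + q₁ * q₃) := by
    linear_combination (q₀ + q₁ + q₂ + q₃ + 1) * h1'
  linarith only [hid, hs2', hAB1, hAB2, hkey]


/-- Fix `s ∈ [0,1]`. The maximum of the quantumness
`Q(p) = (p₀↓ − p₁↓)² + (p₂↓ − p₃↓)²` over all probability vectors `p` with `P₁ ≥ s`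
equals `1 − s²`; it is attained by `q = ((1 + √(1−s²))/2, (1 − √(1−s²))/2, 0, 0)`. -/
theorem best_quantumness_sharpness_tradeoff (s : ℝ) (hs0 : 0 ≤ s) (hs1 : s ≤ 1) :
    (∀ p₀ p₁ p₂ p₃ q₀ q₁ q₂ q₃ : ℝ, 0 ≤ p₀ → 0 ≤ p₁ → 0 ≤ p₂ → 0 ≤ p₃ →
        p₀ + p₁ + p₂ + p₃ = 1 →
        ({q₀, q₁, q₂, q₃} : Multiset ℝ) = ({p₀, p₁, p₂, p₃} : Multiset ℝ) →
        q₁ ≤ q₀ → q₂ ≤ q₁ → q₃ ≤ q₂ →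
        s ≤ 2 * (Real.sqrt (p₀ * p₁) + Real.sqrt (p₂ * p₃)) →
        (q₀ - q₁) ^ 2 + (q₂ - q₃) ^ 2 ≤ 1 - s ^ 2) ∧
    (∀ q₀ q₁ : ℝ, q₀ = (1 + Real.sqrt (1 - s ^ 2)) / 2 →
        q₁ = (1 - Real.sqrt (1 - s ^ 2)) / 2 →
        (0 ≤ q₀ ∧ 0 ≤ q₁ ∧ q₀ + q₁ + 0 + 0 = 1) ∧
        s ≤ 2 * (Real.sqrt (q₀ * q₁) + Real.sqrt ((0 : ℝ) * 0)) ∧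
        (q₀ - q₁) ^ 2 + ((0 : ℝ) - 0) ^ 2 = 1 - s ^ 2) := by
  constructor
  · intro p₀ p₁ p₂ p₃ q₀ q₁ q₂ q₃ hp0 hp1 hp2 hp3 hsum h h10 h21 h32 hP
    exact main_aux s hs0 p₀ p₁ p₂ p₃ q₀ q₁ q₂ q₃ hp0 hp1 hp2 hp3 hsum h h10 h21 h32 hP
  · intro q₀ q₁ hq₀ hq₁
    have h1s : 0 ≤ 1 - s ^ 2 := by nlinarith
    have hr0 : 0 ≤ Real.sqrt (1 - s ^ 2) := Real.sqrt_nonneg _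
    have hr2 : Real.sqrt (1 - s ^ 2) ^ 2 = 1 - s ^ 2 := Real.sq_sqrt h1s
    have hr1 : Real.sqrt (1 - s ^ 2) ≤ 1 := by nlinarith
    subst hq₀ hq₁
    refine ⟨⟨by linarith, by linarith, by ring⟩, ?_, by nlinarith⟩
    have hq01 : (1 + Real.sqrt (1 - s ^ 2)) / 2 * ((1 - Real.sqrt (1 - s ^ 2)) / 2)
        = (s / 2) ^ 2 := by
      have : (1 + Real.sqrt (1 - s ^ 2)) / 2 * ((1 - Real.sqrt (1 - s ^ 2)) / 2)
          = (1 - Real.sqrt (1 - s ^ 2) ^ 2) / 4 := by ring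
      rw [this, hr2]; ring
    rw [hq01, Real.sqrt_sq (by linarith)]
    simp [Real.sqrt_zero]
    linarith
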